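/- Let F be a field of characteristic zero, Q an F-vector space with a nondegenerate quadratic form B, and c₀ ∈ Q with B(c₀) = 1. On V = F ⊕ Q define N(α, x₀) := α·B(x₀), the sharp map (α, x₀)^# := (B(x₀), α·x₀*) where x₀* := B_bil(x₀, c₀)·c₀ − x₀ (B_bil the associated bilinear form with B_bil(x,x) = 2B(x) normalized so that B(c₀)=1 gives c₀* = c₀), and pairing ((α,x₀),(β,y₀)) := αβ + B_bil(x₀*, y₀). Then for all v ∈ V, (v^#)^# = N(v)·v. -/
import Mathlib


open QuadraticMap

/-- The cubic norm structure attached to a quadratic space: on `V = F ⊕ Q` with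
`N(α, x₀) = α·B(x₀)` and `(α, x₀)^# = (B(x₀), α • x₀*)`, where
`x₀* = B_bil(x₀,c₀)•c₀ − x₀` (with `B_bil` the polar bilinear form of `B`),
one has `(v^#)^# = N(v) • v` for all `v ∈ V`. -/
theorem quadraticSpace_cubicNorm_adjoint_identity
    {F Q : Type*} [Field F] [CharZero F] [AddCommGroup Q] [Module F Q]
    (B : QuadraticForm F Q)
    (hnd : ∀ x : Q, (∀ y : Q, polar B x y = 0) → x = 0)
    (c₀ : Q) (hc₀ : B c₀ = 1) :
    ∀ v : F × Q,
      (let star : Q → Q := fun x => polar B x c₀ • c₀ - x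
       let N : F × Q → F := fun w => w.1 * B w.2
       let sharp : F × Q → F × Q := fun w => (B w.2, w.1 • star w.2)
       sharp (sharp v) = N v • v) := by
  intro v
  simp only
  obtain ⟨α, x⟩ := v
  have hBstar : ∀ y : Q, B (polar B y c₀ • c₀ - y) = B y := by
    intro y
    rw [sub_eq_add_neg, QuadraticMap.map_add (⇑B), QuadraticMap.map_smul,
      QuadraticMap.map_neg, polar_neg_right, polar_smul_left, hc₀,
      polar_comm]
    simp only [smul_eq_mul]; ring
  have h2 : polar B c₀ c₀ = 2 := by
    rw [polar_self, hc₀]; ring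
  have h1 : B (α • (polar B x c₀ • c₀ - x)) = α * B x * α := by
    rw [QuadraticMap.map_smul, hBstar]; rw [smul_eq_mul]; ring
  refine Prod.ext h1 ?_
  show B x • (polar B (α • (polar B x c₀ • c₀ - x)) c₀ • c₀ -
      α • (polar B x c₀ • c₀ - x)) = (α * B x) • x
  rw [polar_smul_left, polar_sub_left, polar_smul_left, h2]
  match_scalars <;> (try simp only [smul_eq_mul]) <;> ring
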